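/- arXiv:2601.00652 — 3 statements merged into one kernel-verified Lean document; each statement's English description precedes it below -/
import Mathlib

section
/- Fix 1 < p_min ≤ p_max < ∞. There exists, for every ε ∈ (0,1), a constant C_ε > 0 depending only on ε, p_min, p_max such that for every p ∈ [p_min, p_max] and all y, z ∈ ℝⁿ: |y − z|^p ≤ ε |y|^p + C_ε · (|y|^{p-2} y − |z|^{p-2} z) · (y − z). -/
open Real

lemma myRpowSucc {x : ℝ} (hx : 0 ≤ x) {q r : ℝ} (h : q + 1 = r) (hr : r ≠ 0) :
    x ^ q * x = x ^ r := by
  subst h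
  rw [Real.rpow_add' hx hr, Real.rpow_one]

lemma myAffine {A B s c : ℝ} (h1 : 0 ≤ A + B*c) (h2 : 0 ≤ A - B*c)
    (hs1 : -c ≤ s) (hs2 : s ≤ c) : 0 ≤ A + B*s := by
  rcases le_total 0 B with hB | hB
  · nlinarith
  · nlinarith

lemma myCoreA {p a b : ℝ} (hp : 1 < p) (hb : 0 ≤ b) (hba : b < a) :
    (p-1) * 2^(1-p) * ((a+b)^(p-2) * (a-b)) ≤ a^(p-1) - b^(p-1) := by
  have ha : 0 < a := lt_of_le_of_lt hb hba
  rcases le_total p 2 with hp2 | hp2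
  · -- 1 < p ≤ 2 : concavity / Bernoulli with exponent p-1 ∈ (0,1]
    have hs : (-1:ℝ) ≤ b/a - 1 := by
      have : 0 ≤ b/a := div_nonneg hb ha.le
      linarith
    have hB := rpow_one_add_le_one_add_mul_self hs (by linarith : (0:ℝ) ≤ p-1)
      (by linarith : p-1 ≤ 1)
    rw [show 1 + (b/a - 1) = b/a by ring] at hB
    -- multiply by a^(p-1)
    have hap : (0:ℝ) < a^(p-1) := Real.rpow_pos_of_pos ha _
    have hda : (b/a)^(p-1) = b^(p-1)/a^(p-1) := Real.div_rpow hb ha.le _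
    have hsucc : a^(p-2) * a = a^(p-1) := myRpowSucc ha.le (by ring) (by linarith)
    have key : b^(p-1) ≤ a^(p-1) + (p-1)*((b-a)*a^(p-2)) := by
      have h2 := mul_le_mul_of_nonneg_right hB hap.le
      rw [hda, div_mul_cancel₀ _ hap.ne'] at h2
      have e : (1 + (p-1)*(b/a-1)) * a^(p-1) = a^(p-1) + (p-1)*((b-a)*a^(p-2)) := by
        rw [← hsucc]; field_simp
      linarith [e ▸ h2]
    -- a^(p-2) ≥ (a+b)^(p-2)
    have hanti : (a+b)^(p-2) ≤ a^(p-2) :=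
      Real.rpow_le_rpow_of_nonpos ha (by linarith) (by linarith)
    have h2le1 : (2:ℝ)^(1-p) ≤ 1 :=
      Real.rpow_le_one_of_one_le_of_nonpos one_le_two (by linarith)
    have h2pos : (0:ℝ) ≤ (2:ℝ)^(1-p) := Real.rpow_nonneg (by norm_num) _
    have hRnn : (0:ℝ) ≤ (a+b)^(p-2) := Real.rpow_nonneg (by linarith) _
    have c1 : (p-1) * 2^(1-p) * ((a+b)^(p-2) * (a-b)) ≤ (p-1) * ((a+b)^(p-2) * (a-b)) := by
      have := mul_le_mul_of_nonneg_right h2le1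
        (mul_nonneg hRnn (by linarith : (0:ℝ) ≤ a-b))
      nlinarith
    have c2 : (p-1) * ((a+b)^(p-2) * (a-b)) ≤ (p-1) * (a^(p-2) * (a-b)) := by
      have := mul_le_mul_of_nonneg_right hanti (by linarith : (0:ℝ) ≤ a-b)
      nlinarith
    nlinarith [key]
  · -- 2 ≤ p : convexity / Bernoulli, tangent at midpoint m = (a+b)/2
    have hm : (0:ℝ) < (a+b)/2 := by linarith
    set m : ℝ := (a+b)/2 with hmdef
    have hs : (-1:ℝ) ≤ a/m - 1 := by
      have : 0 ≤ a/m := div_nonneg ha.le hm.le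
      linarith
    have hB := one_add_mul_self_le_rpow_one_add hs (by linarith : (1:ℝ) ≤ p-1)
    rw [show 1 + (a/m - 1) = a/m by ring] at hB
    have hmp : (0:ℝ) < m^(p-1) := Real.rpow_pos_of_pos hm _
    have hda : (a/m)^(p-1) = a^(p-1)/m^(p-1) := Real.div_rpow ha.le hm.le _
    have hsucc : m^(p-2) * m = m^(p-1) := myRpowSucc hm.le (by ring) (by linarith)
    have key : m^(p-1) + (p-1)*((a-m)*m^(p-2)) ≤ a^(p-1) := by
      have h2 := mul_le_mul_of_nonneg_right hB hmp.le
      rw [hda, div_mul_cancel₀ _ hmp.ne'] at h2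
      have e : (1 + (p-1)*(a/m-1)) * m^(p-1) = m^(p-1) + (p-1)*((a-m)*m^(p-2)) := by
        rw [← hsucc]; field_simp
      linarith [e ▸ h2]
    have hbm : b^(p-1) ≤ m^(p-1) :=
      Real.rpow_le_rpow hb (by rw [hmdef]; linarith) (by linarith)
    -- rewrite LHS
    have em : m^(p-2) * 2^(p-2) = (a+b)^(p-2) := by
      rw [← Real.mul_rpow hm.le (by norm_num : (0:ℝ) ≤ 2)]
      congr 1
      rw [hmdef]; ring
    have e4 : (2:ℝ)^(1-p) * 2^(p-2) * 2 = 1 := by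
      rw [← Real.rpow_add two_pos, ← Real.rpow_add_one (by norm_num : (2:ℝ) ≠ 0),
        show 1-p+(p-2)+1 = (0:ℝ) by ring, Real.rpow_zero]
    have lhs_eq : (p-1) * 2^(1-p) * ((a+b)^(p-2) * (a-b))
        = (p-1)*((a-m)*m^(p-2)) := by
      rw [← em, hmdef]
      linear_combination ((p-1) * ((a+b)/2)^(p-2) * (a-b) / 2) * e4
    rw [lhs_eq]
    linarith


lemma myScalarA {pmin pmax p : ℝ} (h1 : 1 < pmin) (hl : pmin ≤ p) (hr : p ≤ pmax)
    {a b : ℝ} (hb : 0 ≤ b) (hba : b ≤ a) :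
    min (pmin-1) 1 * 2^(1-pmax) * ((a+b)^(p-2) * (a-b)) ≤ a^(p-1) - b^(p-1) := by
  rcases eq_or_lt_of_le hba with rfl | hba'
  · simp
  · have hp : 1 < p := lt_of_lt_of_le h1 hl
    have hcore := myCoreA hp hb hba'
    have hfac : 0 ≤ (a+b)^(p-2) * (a-b) :=
      mul_nonneg (Real.rpow_nonneg (by linarith) _) (by linarith)
    have hcc : min (pmin-1) 1 * 2^(1-pmax) ≤ (p-1) * 2^(1-p) := by
      apply mul_le_mul
      · exact le_trans (min_le_left _ _) (by linarith)
      · exact Real.rpow_le_rpow_of_exponent_le one_le_two (by linarith)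
      · exact Real.rpow_nonneg (by norm_num) _
      · linarith
    calc min (pmin-1) 1 * 2^(1-pmax) * ((a+b)^(p-2) * (a-b))
        ≤ (p-1) * 2^(1-p) * ((a+b)^(p-2) * (a-b)) := mul_le_mul_of_nonneg_right hcc hfac
      _ ≤ a^(p-1) - b^(p-1) := hcore

lemma myScalarB_aux {pmin pmax p : ℝ} (h1 : 1 < pmin) (hl : pmin ≤ p) (hr : p ≤ pmax)
    {a b : ℝ} (hb : 0 ≤ b) (hba : b ≤ a) :
    min (pmin-1) 1 * 2^(1-pmax) * (a+b)^(p-1) ≤ a^(p-1) + b^(p-1) := by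
  have hp : 1 < p := lt_of_lt_of_le h1 hl
  have ha : 0 ≤ a := le_trans hb hba
  have hmid : ((a+b)/2)^(p-1) ≤ a^(p-1) :=
    Real.rpow_le_rpow (by linarith) (by linarith) (by linarith)
  have hbnn : (0:ℝ) ≤ b^(p-1) := Real.rpow_nonneg hb _
  have emul : (2:ℝ)^(1-p) * 2^(p-1) = 1 := by
    rw [← Real.rpow_add two_pos, show 1-p+(p-1) = (0:ℝ) by ring, Real.rpow_zero]
  have e : 2^(1-p) * (a+b)^(p-1) = ((a+b)/2)^(p-1) := by
    rw [Real.div_rpow (by linarith : (0:ℝ) ≤ a+b) (by norm_num : (0:ℝ) ≤ 2) (p-1)]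
    have hT : (2:ℝ)^(p-1) ≠ 0 := (Real.rpow_pos_of_pos two_pos _).ne'
    field_simp
    linear_combination (a+b)^(p-1) * emul
  have hchain : min (pmin-1) 1 * 2^(1-pmax) * (a+b)^(p-1) ≤ 2^(1-p) * (a+b)^(p-1) := by
    have hc1 : min (pmin-1) 1 * 2^(1-pmax) ≤ 2^(1-p) := by
      calc min (pmin-1) 1 * 2^(1-pmax) ≤ 1 * 2^(1-pmax) :=
            mul_le_mul_of_nonneg_right (min_le_right _ _) (Real.rpow_nonneg (by norm_num) _)
        _ = 2^(1-pmax) := one_mul _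
        _ ≤ 2^(1-p) := Real.rpow_le_rpow_of_exponent_le one_le_two (by linarith)
    exact mul_le_mul_of_nonneg_right hc1 (Real.rpow_nonneg (by linarith) _)
  calc min (pmin-1) 1 * 2^(1-pmax) * (a+b)^(p-1) ≤ 2^(1-p) * (a+b)^(p-1) := hchain
    _ = ((a+b)/2)^(p-1) := e
    _ ≤ a^(p-1) := hmid
    _ ≤ a^(p-1) + b^(p-1) := by linarith

lemma myScalarB {pmin pmax p : ℝ} (h1 : 1 < pmin) (hl : pmin ≤ p) (hr : p ≤ pmax)
    {a b : ℝ} (ha : 0 ≤ a) (hb : 0 ≤ b) :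
    min (pmin-1) 1 * 2^(1-pmax) * (a+b)^(p-1) ≤ a^(p-1) + b^(p-1) := by
  rcases le_total b a with h | h
  · exact myScalarB_aux h1 hl hr hb h
  · have := myScalarB_aux h1 hl hr ha h
    rw [add_comm b a, add_comm (b^(p-1))] at this
    exact this

lemma myKeyReal {pmin pmax p : ℝ} (h1 : 1 < pmin) (hl : pmin ≤ p) (hr : p ≤ pmax)
    {a b s : ℝ} (ha : 0 ≤ a) (hb : 0 ≤ b) (hs : |s| ≤ a*b) :
    min (pmin-1) 1 * 2^(1-pmax) * ((a+b)^(p-2) * (a^2 - 2*s + b^2))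
      ≤ a^(p-2)*a^2 + b^(p-2)*b^2 - (a^(p-2)+b^(p-2))*s := by
  have hp : 1 < p := lt_of_lt_of_le h1 hl
  set c : ℝ := min (pmin-1) 1 * 2^(1-pmax) with hcdef
  have hPa : a^(p-2) * a = a^(p-1) := myRpowSucc ha (by ring) (by linarith)
  have hQb : b^(p-2) * b = b^(p-1) := myRpowSucc hb (by ring) (by linarith)
  have hRr : (a+b)^(p-2) * (a+b) = (a+b)^(p-1) :=
    myRpowSucc (by linarith) (by ring) (by linarith)
  have E1 : c * ((a+b)^(p-2) * (a-b)^2) ≤ (a^(p-1) - b^(p-1)) * (a-b) := by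
    rcases le_total b a with h | h
    · have h' := mul_le_mul_of_nonneg_right (myScalarA h1 hl hr hb h)
        (sub_nonneg.mpr h)
      calc c * ((a+b)^(p-2) * (a-b)^2)
          = c * ((a+b)^(p-2) * (a-b)) * (a-b) := by ring
        _ ≤ (a^(p-1) - b^(p-1)) * (a-b) := h'
    · have h' := mul_le_mul_of_nonneg_right (myScalarA h1 hl hr ha h)
        (sub_nonneg.mpr h)
      have hcomm : (b+a)^(p-2) = (a+b)^(p-2) := by rw [add_comm]
      rw [hcomm] at h'
      calc c * ((a+b)^(p-2) * (a-b)^2)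
          = c * ((a+b)^(p-2) * (b-a)) * (b-a) := by ring
        _ ≤ (b^(p-1) - a^(p-1)) * (b-a) := h'
        _ = (a^(p-1) - b^(p-1)) * (a-b) := by ring
  have E2 : c * ((a+b)^(p-2) * (a+b)^2) ≤ (a^(p-1) + b^(p-1)) * (a+b) := by
    have h' := mul_le_mul_of_nonneg_right (myScalarB h1 hl hr ha hb)
      (by linarith : (0:ℝ) ≤ a+b)
    calc c * ((a+b)^(p-2) * (a+b)^2) = c * ((a+b)^(p-2) * (a+b)) * (a+b) := by ring
      _ = c * (a+b)^(p-1) * (a+b) := by rw [hRr]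
      _ ≤ (a^(p-1) + b^(p-1)) * (a+b) := h'
  obtain ⟨hs1, hs2⟩ := abs_le.mp hs
  have key1 : 0 ≤ (a^(p-2)*a^2 + b^(p-2)*b^2 - c*((a+b)^(p-2)*(a^2+b^2)))
      + (2*c*(a+b)^(p-2) - (a^(p-2)+b^(p-2)))*(a*b) := by
    have e : (a^(p-2)*a^2 + b^(p-2)*b^2 - c*((a+b)^(p-2)*(a^2+b^2)))
        + (2*c*(a+b)^(p-2) - (a^(p-2)+b^(p-2)))*(a*b)
        = (a^(p-1) - b^(p-1)) * (a-b) - c * ((a+b)^(p-2) * (a-b)^2) := by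
      rw [← hPa, ← hQb]; ring
    rw [e]; linarith
  have key2 : 0 ≤ (a^(p-2)*a^2 + b^(p-2)*b^2 - c*((a+b)^(p-2)*(a^2+b^2)))
      - (2*c*(a+b)^(p-2) - (a^(p-2)+b^(p-2)))*(a*b) := by
    have e : (a^(p-2)*a^2 + b^(p-2)*b^2 - c*((a+b)^(p-2)*(a^2+b^2)))
        - (2*c*(a+b)^(p-2) - (a^(p-2)+b^(p-2)))*(a*b)
        = (a^(p-1) + b^(p-1)) * (a+b) - c * ((a+b)^(p-2) * (a+b)^2) := by
      rw [← hPa, ← hQb]; ring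
    rw [e]; linarith
  have final := myAffine key1 key2 hs1 hs2
  nlinarith [final]


lemma myKeyK {pmin pmax : ℝ} (h1 : 1 < pmin) {p : ℝ} (hl : pmin ≤ p) (hr : p ≤ pmax)
    {n : ℕ} (y z : EuclideanSpace ℝ (Fin n)) :
    min (pmin-1) 1 * 2^(1-pmax) * ((‖y‖+‖z‖)^(p-2) * ‖y-z‖^2)
      ≤ (inner ℝ ((‖y‖ ^ (p - 2)) • y - (‖z‖ ^ (p - 2)) • z) (y - z) : ℝ) := by
  have hinner : (inner ℝ ((‖y‖ ^ (p - 2)) • y - (‖z‖ ^ (p - 2)) • z) (y - z) : ℝ)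
      = ‖y‖^(p-2)*‖y‖^2 + ‖z‖^(p-2)*‖z‖^2
        - (‖y‖^(p-2)+‖z‖^(p-2)) * (inner ℝ y z : ℝ) := by
    simp only [inner_sub_left, inner_sub_right, real_inner_smul_left,
      real_inner_self_eq_norm_sq, real_inner_comm z y]
    ring
  have hns : ‖y-z‖^2 = ‖y‖^2 - 2*(inner ℝ y z : ℝ) + ‖z‖^2 := norm_sub_sq_real y z
  rw [hinner, hns]
  exact myKeyReal h1 hl hr (norm_nonneg y) (norm_nonneg z) (abs_real_inner_le_norm y z)

set_option maxHeartbeats 1000000 in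
/-- `|y − z|^p ≤ ε |y|^p + C_ε J_p(y,z)`, uniformly in `p ∈ [p_min, p_max]`. -/
theorem dist_pow_le_eps_add_Jp
    (n : ℕ) (pmin pmax : ℝ) (h1 : 1 < pmin) (h2 : pmin ≤ pmax)
    (ε : ℝ) (hε : ε ∈ Set.Ioo (0 : ℝ) 1) :
    ∃ C : ℝ, 0 < C ∧
      ∀ p ∈ Set.Icc pmin pmax, ∀ y z : EuclideanSpace ℝ (Fin n),
        ‖y - z‖ ^ p ≤ ε * ‖y‖ ^ p +
          C * (inner ℝ ((‖y‖ ^ (p - 2)) • y - (‖z‖ ^ (p - 2)) • z) (y - z) : ℝ) := by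
  obtain ⟨hε0, hε1⟩ := hε
  set c₀ : ℝ := min (pmin-1) 1 * 2^(1-pmax) with hc₀def
  have hc₀ : 0 < c₀ :=
    mul_pos (lt_min (by linarith) one_pos) (Real.rpow_pos_of_pos two_pos _)
  refine ⟨4 / (ε * c₀), by positivity, ?_⟩
  intro p hp y z
  obtain ⟨hl, hr⟩ := hp
  have hpgt : 1 < p := lt_of_lt_of_le h1 hl
  set C : ℝ := 4 / (ε * c₀) with hCdef
  have hC : 0 < C := by positivity
  set J : ℝ := (inner ℝ ((‖y‖ ^ (p - 2)) • y - (‖z‖ ^ (p - 2)) • z) (y - z) : ℝ) with hJdef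
  have hK : c₀ * ((‖y‖+‖z‖)^(p-2) * ‖y-z‖^2) ≤ J := myKeyK h1 hl hr y z
  have hKnn : (0:ℝ) ≤ (‖y‖+‖z‖)^(p-2) * ‖y-z‖^2 := by positivity
  have hJ : 0 ≤ J := le_trans (by positivity) hK
  have hwab : ‖y-z‖ ≤ ‖y‖ + ‖z‖ := norm_sub_le y z
  have hεap : (0:ℝ) ≤ ε * ‖y‖^p := by positivity
  have hCc : C * c₀ = 4 / ε := by
    rw [hCdef]; field_simp
  rcases le_total p 2 with hp2 | hp2
  · -- 1 < p ≤ 2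
    rcases eq_or_lt_of_le (norm_nonneg (y - z)) with hw0 | hw
    · -- y - z = 0
      have : ‖y-z‖^p = 0 := by
        rw [← hw0, Real.zero_rpow (by linarith : p ≠ 0)]
      rw [this]
      positivity
    · rcases le_total (‖y‖+‖z‖) ((4/ε) * ‖y-z‖) with hcase | hcase
      · -- comparable case
        have h4ε : (1:ℝ) ≤ 4/ε := by
          rw [le_div_iff₀ hε0]; linarith
        have hab0 : 0 < ‖y‖ + ‖z‖ := lt_of_lt_of_le hw hwab
        have hstep : ((4/ε) * ‖y-z‖)^(p-2) ≤ (‖y‖+‖z‖)^(p-2) :=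
          Real.rpow_le_rpow_of_nonpos hab0 hcase (by linarith)
        have hmulr : ((4/ε) * ‖y-z‖)^(p-2) = (4/ε)^(p-2) * ‖y-z‖^(p-2) :=
          Real.mul_rpow (by positivity) (norm_nonneg _)
        have hee : (4/ε)^(-1:ℝ) ≤ (4/ε)^(p-2) :=
          Real.rpow_le_rpow_of_exponent_le h4ε (by linarith)
        have hinv : (4/ε)^(-1:ℝ) = ε/4 := by
          rw [Real.rpow_neg_one, inv_div]
        have hwp : ‖y-z‖^(p-2) * ‖y-z‖^2 = ‖y-z‖^p := by
          have e := Real.rpow_add hw (p-2) 2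
          rw [show p-2+2 = p by ring, Real.rpow_two] at e
          exact e.symm
        have hchain : c₀ * ((ε/4) * ‖y-z‖^p) ≤ J := by
          calc c₀ * ((ε/4) * ‖y-z‖^p)
              = c₀ * (((ε/4) * ‖y-z‖^(p-2)) * ‖y-z‖^2) := by rw [← hwp]; ring
            _ ≤ c₀ * (((4/ε)^(p-2) * ‖y-z‖^(p-2)) * ‖y-z‖^2) := by
                have hwpnn : (0:ℝ) ≤ ‖y-z‖^(p-2) := Real.rpow_nonneg (norm_nonneg _) _
                have : (ε/4) ≤ (4/ε)^(p-2) := hinv ▸ hee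
                have := mul_le_mul_of_nonneg_right
                  (mul_le_mul_of_nonneg_right this hwpnn)
                  (by positivity : (0:ℝ) ≤ ‖y-z‖^2)
                nlinarith [hc₀]
            _ = c₀ * (((4/ε) * ‖y-z‖)^(p-2) * ‖y-z‖^2) := by rw [hmulr]
            _ ≤ c₀ * ((‖y‖+‖z‖)^(p-2) * ‖y-z‖^2) := by
                have := mul_le_mul_of_nonneg_right hstep
                  (by positivity : (0:ℝ) ≤ ‖y-z‖^2)
                nlinarith [hc₀]
            _ ≤ J := hK
        -- conclude: C * J ≥ ‖y-z‖^p
        have hfin : ‖y-z‖^p ≤ C * J := by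
          have h' := mul_le_mul_of_nonneg_left hchain hC.le
          have e : C * (c₀ * ((ε/4) * ‖y-z‖^p)) = ‖y-z‖^p := by
            rw [hCdef]; field_simp
          linarith [e ▸ h']
        linarith
      · -- ‖y-z‖ small compared to ‖y‖
        have h4 : 4 * ‖y-z‖ ≤ ε * (‖y‖+‖z‖) := by
          rw [div_mul_eq_mul_div, div_le_iff₀ hε0] at hcase
          linarith [hcase]
        have hzb : ‖z‖ ≤ ‖y‖ + ‖y-z‖ := by
          calc ‖z‖ = ‖y - (y-z)‖ := by rw [sub_sub_cancel]
            _ ≤ ‖y‖ + ‖y-z‖ := norm_sub_le _ _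
        have e1 : ε * (‖y‖+‖z‖) ≤ ε * (2*‖y‖+‖y-z‖) := by
          apply mul_le_mul_of_nonneg_left _ hε0.le
          linarith
        have e2 : ε * ‖y-z‖ ≤ 1 * ‖y-z‖ :=
          mul_le_mul_of_nonneg_right hε1.le (norm_nonneg _)
        have hwa : ‖y-z‖ ≤ (2*ε/3) * ‖y‖ := by linarith
        have hstep : ‖y-z‖^p ≤ ((2*ε/3) * ‖y‖)^p :=
          Real.rpow_le_rpow (norm_nonneg _) hwa (by linarith)
        have hmulr : ((2*ε/3) * ‖y‖)^p = (2*ε/3)^p * ‖y‖^p :=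
          Real.mul_rpow (by linarith : (0:ℝ) ≤ 2*ε/3) (norm_nonneg _)
        have hexp : (2*ε/3)^p ≤ (2*ε/3)^(1:ℝ) :=
          Real.rpow_le_rpow_of_exponent_ge (by linarith : (0:ℝ) < 2*ε/3)
            (by linarith : 2*ε/3 ≤ 1) (by linarith : (1:ℝ) ≤ p)
        have hone : (2*ε/3)^(1:ℝ) = 2*ε/3 := Real.rpow_one _
        have : ‖y-z‖^p ≤ ε * ‖y‖^p := by
          have hynn : (0:ℝ) ≤ ‖y‖^p := Real.rpow_nonneg (norm_nonneg _) _
          calc ‖y-z‖^p ≤ (2*ε/3)^p * ‖y‖^p := hmulr ▸ hstep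
            _ ≤ (2*ε/3) * ‖y‖^p := by
                have := mul_le_mul_of_nonneg_right (hone ▸ hexp) hynn
                linarith
            _ ≤ ε * ‖y‖^p := by nlinarith
        linarith [mul_nonneg hC.le hJ]
  · -- 2 ≤ p
    have hwp : ‖y-z‖^p = ‖y-z‖^(p-2) * ‖y-z‖^2 := by
      have e := Real.rpow_add' (norm_nonneg (y-z)) (show (p-2)+2 ≠ 0 by intro h; linarith)
      rw [show p-2+2 = p by ring, Real.rpow_two] at e
      exact e
    have hmono : ‖y-z‖^(p-2) ≤ (‖y‖+‖z‖)^(p-2) :=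
      Real.rpow_le_rpow (norm_nonneg _) hwab (by linarith)
    have ht : ‖y-z‖^p ≤ (‖y‖+‖z‖)^(p-2) * ‖y-z‖^2 := by
      rw [hwp]
      exact mul_le_mul_of_nonneg_right hmono (by positivity)
    have hCc1 : 1 ≤ C * c₀ := by
      rw [hCc, le_div_iff₀ hε0]; linarith
    have : ‖y-z‖^p ≤ C * J := by
      have h' := mul_le_mul_of_nonneg_left hK hC.le
      have h'' := le_mul_of_one_le_left hKnn hCc1
      linarith
    linarith
end

section
/- Let 1 < p_min ≤ p_max < ∞. There is a constant C = C(p_min, p_max) > 0 such that for every p, q ∈ [p_min, p_max] with q ≥ p and every y ∈ ℝⁿ: | |y|^{q-1} − |y|^{p-1} | ≤ C (q − p) [ 1 + |y|^{q-1} log(e + |y|^q) ]. -/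
private lemma key_exp (u : ℝ) (hu : 0 ≤ u) : Real.exp u - 1 ≤ u * Real.exp u := by
  have h : (1 - u) * Real.exp u ≤ 1 := by
    have h1 : 1 - u ≤ Real.exp (-u) := by
      have := Real.add_one_le_exp (-u); linarith
    calc (1 - u) * Real.exp u ≤ Real.exp (-u) * Real.exp u :=
          mul_le_mul_of_nonneg_right h1 (Real.exp_pos u).le
      _ = 1 := by rw [← Real.exp_add]; simp
  nlinarith

private lemma key_rpow (x a : ℝ) (hx : 1 ≤ x) (ha : 0 ≤ a) :
    x ^ a - 1 ≤ a * Real.log x * x ^ a := by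
  have hx0 : 0 < x := lt_of_lt_of_le one_pos hx
  have hlog : 0 ≤ Real.log x := Real.log_nonneg hx
  have hu : 0 ≤ a * Real.log x := mul_nonneg ha hlog
  have hxa : x ^ a = Real.exp (a * Real.log x) := by
    rw [Real.rpow_def_of_pos hx0, mul_comm]
  rw [hxa]
  exact key_exp _ hu

private lemma key_small (t a : ℝ) (ht : 0 < t) (ht1 : t ≤ 1) (ha : 0 < a) :
    t ^ a * (-Real.log t) ≤ 1 / a := by
  have hs : 0 < t ^ a := Real.rpow_pos_of_pos ht a
  have hlog : Real.log ((t ^ a)⁻¹) ≤ (t ^ a)⁻¹ - 1 :=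
    Real.log_le_sub_one_of_pos (inv_pos.mpr hs)
  rw [Real.log_inv] at hlog
  have h2 : t ^ a * (-Real.log (t ^ a)) ≤ 1 := by
    have := mul_le_mul_of_nonneg_left hlog hs.le
    have h3 : t ^ a * (t ^ a)⁻¹ = 1 := mul_inv_cancel₀ hs.ne'
    nlinarith
  rw [Real.log_rpow ht] at h2
  rw [div_eq_inv_mul, ← mul_le_mul_iff_right₀ ha]
  calc a * (t ^ a * (-Real.log t)) = t ^ a * (-(a * Real.log t)) := by ring
    _ ≤ 1 := h2
    _ = a * (a⁻¹ * 1) := by field_simp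

/-- Quantitative continuity of `t ↦ |y|^{t-1}` in the exponent, with logarithmic weight. -/
theorem abs_pow_sub_pow_exponent_le
    (n : ℕ) (pmin pmax : ℝ) (h1 : 1 < pmin) (h2 : pmin ≤ pmax) :
    ∃ C : ℝ, 0 < C ∧
      ∀ p ∈ Set.Icc pmin pmax, ∀ q ∈ Set.Icc pmin pmax, p ≤ q →
        ∀ y : EuclideanSpace ℝ (Fin n),
          |‖y‖ ^ (q - 1) - ‖y‖ ^ (p - 1)| ≤
            C * (q - p) * (1 + ‖y‖ ^ (q - 1) * Real.log (Real.exp 1 + ‖y‖ ^ q)) := by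
  have hpm : 0 < pmin - 1 := by linarith
  refine ⟨1 + 1 / (pmin - 1), by positivity, ?_⟩
  intro p hp q hq hpq y
  obtain ⟨hp1, hp2⟩ := hp
  obtain ⟨hq1, hq2⟩ := hq
  have hp' : 1 < p := lt_of_lt_of_le h1 hp1
  have hq' : 1 < q := lt_of_lt_of_le h1 hq1
  have hqp : 0 ≤ q - p := by linarith
  set t : ℝ := ‖y‖ with hT
  have ht : 0 ≤ t := norm_nonneg y
  have hC1 : (1 : ℝ) ≤ 1 + 1 / (pmin - 1) := le_add_of_nonneg_right (by positivity)
  have hetq : 0 ≤ t ^ q := Real.rpow_nonneg ht q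
  have hloge : 0 ≤ Real.log (Real.exp 1 + t ^ q) := by
    apply Real.log_nonneg
    nlinarith [Real.add_one_le_exp (1 : ℝ)]
  rcases eq_or_lt_of_le ht with h0 | htpos
  · -- t = 0
    rw [← h0]
    rw [Real.zero_rpow (by linarith : q - 1 ≠ 0), Real.zero_rpow (by linarith : p - 1 ≠ 0)]
    simp only [sub_zero, abs_zero, zero_mul, add_zero, mul_one]
    nlinarith
  · rcases le_total t 1 with ht1 | ht1
    · -- 0 < t ≤ 1
      have hle : t ^ (q - 1) ≤ t ^ (p - 1) :=
        Real.rpow_le_rpow_of_exponent_ge htpos ht1 (by linarith)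
      rw [abs_of_nonpos (by linarith)]
      have hx1 : 1 ≤ t⁻¹ := (one_le_inv₀ htpos).mpr ht1
      have hkey := key_rpow t⁻¹ (q - p) hx1 hqp
      have hinveq : t⁻¹ ^ (q - p) = t ^ (p - q) := by
        rw [← Real.rpow_neg_one t, ← Real.rpow_mul ht]
        norm_num
      rw [Real.log_inv, hinveq] at hkey
      have hkey' : t ^ (p - q) - 1 ≤ (q - p) * (-Real.log t) * t ^ (p - q) := hkey
      -- t^(p-1) - t^(q-1) = t^(q-1) * (t^(p-q) - 1)
      have hsplit : t ^ (p - 1) = t ^ (q - 1) * t ^ (p - q) := by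
        rw [← Real.rpow_add htpos]; ring_nf
      have hsplit2 : t ^ (q - 1) * t ^ (p - q) = t ^ (p - 1) := hsplit.symm
      have hq1pos : 0 ≤ t ^ (q - 1) := Real.rpow_nonneg ht _
      have hstep : t ^ (p - 1) - t ^ (q - 1) ≤ (q - p) * (t ^ (p - 1) * (-Real.log t)) := by
        have := mul_le_mul_of_nonneg_left hkey' hq1pos
        calc t ^ (p - 1) - t ^ (q - 1) = t ^ (q - 1) * (t ^ (p - q) - 1) := by
              rw [hsplit]; ring
          _ ≤ t ^ (q - 1) * ((q - p) * (-Real.log t) * t ^ (p - q)) := this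
          _ = (q - p) * (t ^ (q - 1) * t ^ (p - q) * (-Real.log t)) := by ring
          _ = (q - p) * (t ^ (p - 1) * (-Real.log t)) := by rw [hsplit2]
      have hsmall : t ^ (p - 1) * (-Real.log t) ≤ 1 / (p - 1) :=
        key_small t (p - 1) htpos ht1 (by linarith)
      have hple : 1 / (p - 1) ≤ 1 / (pmin - 1) := by
        apply one_div_le_one_div_of_le hpm; linarith
      have hmul : 0 ≤ t ^ (q - 1) * Real.log (Real.exp 1 + t ^ q) :=
        mul_nonneg hq1pos hloge
      nlinarith [mul_le_mul_of_nonneg_left hsmall hqp, mul_le_mul_of_nonneg_left hple hqp]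
    · -- t ≥ 1
      have hle : t ^ (p - 1) ≤ t ^ (q - 1) :=
        Real.rpow_le_rpow_of_exponent_le ht1 (by linarith)
      rw [abs_of_nonneg (by linarith)]
      have hkey := key_rpow t (q - p) ht1 hqp
      have hsplit : t ^ (q - 1) = t ^ (p - 1) * t ^ (q - p) := by
        rw [← Real.rpow_add htpos]; ring_nf
      have hp1pos : 0 ≤ t ^ (p - 1) := Real.rpow_nonneg ht _
      have hq1pos : 0 ≤ t ^ (q - 1) := Real.rpow_nonneg ht _
      have hlogt : 0 ≤ Real.log t := Real.log_nonneg ht1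
      have hstep : t ^ (q - 1) - t ^ (p - 1) ≤ (q - p) * Real.log t * t ^ (q - 1) := by
        have := mul_le_mul_of_nonneg_left hkey hp1pos
        calc t ^ (q - 1) - t ^ (p - 1) = t ^ (p - 1) * (t ^ (q - p) - 1) := by
              rw [hsplit]; ring
          _ ≤ t ^ (p - 1) * ((q - p) * Real.log t * t ^ (q - p)) := this
          _ = (q - p) * Real.log t * (t ^ (p - 1) * t ^ (q - p)) := by ring
          _ = (q - p) * Real.log t * t ^ (q - 1) := by rw [← hsplit]
      have h6 : t ^ (1 : ℝ) ≤ t ^ q :=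
        Real.rpow_le_rpow_of_exponent_le ht1 (by linarith)
      rw [Real.rpow_one] at h6
      have hlog2 : Real.log t ≤ Real.log (Real.exp 1 + t ^ q) :=
        Real.log_le_log htpos (by linarith [Real.exp_pos (1 : ℝ)])
      nlinarith [mul_le_mul_of_nonneg_right (mul_le_mul_of_nonneg_left hlog2 hqp) hq1pos,
        mul_nonneg hq1pos hloge]
end

section
/- Let s ≥ 1, β ∈ [0, n/s), and f ∈ L^s(ℝⁿ). There exists C = C(n, s, β) > 0 such that for every λ > 0: |{ x ∈ ℝⁿ : M_β f(x) > λ }| ≤ C ( λ^{-s} ∫_{ℝⁿ} |f|^s )^{n/(n − β s)}, where M_β f(x) = sup_{r>0} r^β ⨍_{B_r(x)} |f|. -/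
open MeasureTheory ENNReal Metric

/-- Fractional maximal function of order `β`. -/
noncomputable def fracMax (n : ℕ) (β : ℝ) (f : (Fin n → ℝ) → ℝ) (x : Fin n → ℝ) : ℝ≥0∞ :=
  ⨆ (r : ℝ) (_ : 0 < r),
    ENNReal.ofReal (r ^ β) *
      ((volume (Metric.ball x r))⁻¹ * ∫⁻ y in Metric.ball x r, ENNReal.ofReal |f y|)

/-- Cut-off fractional maximal function `M_β^ρ` (radii `0 < r < ρ`). -/
noncomputable def fracMaxCut (n : ℕ) (β ρ : ℝ) (f : (Fin n → ℝ) → ℝ) (x : Fin n → ℝ) : ℝ≥0∞ :=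
  ⨆ (r : ℝ) (_ : 0 < r) (_ : r < ρ),
    ENNReal.ofReal (r ^ β) *
      ((volume (Metric.ball x r))⁻¹ * ∫⁻ y in Metric.ball x r, ENNReal.ofReal |f y|)

/-- Tail fractional maximal function `T_β^ρ` (radii `r ≥ ρ`). -/
noncomputable def fracMaxTail (n : ℕ) (β ρ : ℝ) (f : (Fin n → ℝ) → ℝ) (x : Fin n → ℝ) : ℝ≥0∞ :=
  ⨆ (r : ℝ) (_ : ρ ≤ r),
    ENNReal.ofReal (r ^ β) *
      ((volume (Metric.ball x r))⁻¹ * ∫⁻ y in Metric.ball x r, ENNReal.ofReal |f y|)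

lemma holder_ball {n : ℕ} {s : ℝ} (hs : 1 ≤ s) {f : (Fin n → ℝ) → ℝ}
    (hmeas : Measurable f) (x : Fin n → ℝ) (r : ℝ) :
    (∫⁻ y in Metric.ball x r, ENNReal.ofReal |f y|) ≤
      (∫⁻ y in Metric.ball x r, ENNReal.ofReal (|f y| ^ s)) ^ (1/s) *
        (volume (Metric.ball x r)) ^ (1 - 1/s) := by
  rcases eq_or_lt_of_le hs with h1 | h1
  · simp [← h1, Real.rpow_one]
  · have hs0 : (0:ℝ) < s := lt_trans one_pos h1
    have hpq : s.HolderConjugate (s / (s - 1)) := Real.HolderConjugate.conjExponent h1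
    have := ENNReal.lintegral_mul_le_Lp_mul_Lq (volume.restrict (Metric.ball x r)) hpq
      (f := fun y => ENNReal.ofReal |f y|) (g := fun _ => 1)
      (hmeas.abs.ennreal_ofReal).aemeasurable aemeasurable_const
    simp only [Pi.mul_apply, mul_one, ENNReal.one_rpow, lintegral_const,
      Measure.restrict_apply MeasurableSet.univ, Set.univ_inter] at this
    have h1q : 1 / (s / (s - 1)) = 1 - 1/s := by field_simp
    have hconv : ∀ y, ENNReal.ofReal |f y| ^ s = ENNReal.ofReal (|f y| ^ s) := fun y =>
      ENNReal.ofReal_rpow_of_nonneg (abs_nonneg _) hs0.le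
    simp only [hconv, h1q] at this
    convert this using 3
    simp

lemma star_ineq {n : ℕ} {s β lam : ℝ} (hs : 1 ≤ s) (hlam : 0 < lam)
    {f : (Fin n → ℝ) → ℝ} (hmeas : Measurable f) {x : Fin n → ℝ} {r : ℝ} (hr0 : 0 < r)
    (hlt : ENNReal.ofReal lam < ENNReal.ofReal (r ^ β) *
      ((volume (Metric.ball x r))⁻¹ * ∫⁻ y in Metric.ball x r, ENNReal.ofReal |f y|)) :
    ENNReal.ofReal (lam ^ s) * volume (Metric.ball x r) <
      ENNReal.ofReal (r ^ (β * s)) * ∫⁻ y in Metric.ball x r, ENNReal.ofReal (|f y| ^ s) := by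
  set μB := volume (Metric.ball x r) with hμBdef
  set G := ∫⁻ y in Metric.ball x r, ENNReal.ofReal (|f y| ^ s) with hGdef
  have hs0 : (0:ℝ) < s := lt_of_lt_of_le one_pos hs
  have hμB0 : μB ≠ 0 := (measure_ball_pos volume x hr0).ne'
  have hμBT : μB ≠ ∞ := measure_ball_lt_top.ne
  have h2 : μB⁻¹ * (G ^ (1/s) * μB ^ (1 - 1/s)) = G ^ (1/s) * μB ^ (-(1/s)) := by
    rw [← ENNReal.rpow_neg_one μB, mul_comm, mul_assoc,
      ← ENNReal.rpow_add _ _ hμB0 hμBT]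
    ring_nf
  have hstep : ENNReal.ofReal lam <
      ENNReal.ofReal (r ^ β) * (G ^ (1/s) * μB ^ (-(1/s))) := by
    refine hlt.trans_le ?_
    rw [← h2]
    gcongr
    exact holder_ball hs hmeas x r
  have h3 := ENNReal.rpow_lt_rpow hstep hs0
  have hL : (ENNReal.ofReal lam) ^ s = ENNReal.ofReal (lam ^ s) :=
    ENNReal.ofReal_rpow_of_nonneg hlam.le hs0.le
  have hR : (ENNReal.ofReal (r ^ β) * (G ^ (1/s) * μB ^ (-(1/s)))) ^ s =
      ENNReal.ofReal (r ^ (β * s)) * G * μB⁻¹ := by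
    rw [ENNReal.mul_rpow_of_nonneg _ _ hs0.le, ENNReal.mul_rpow_of_nonneg _ _ hs0.le,
      ← ENNReal.rpow_mul, ← ENNReal.rpow_mul,
      one_div_mul_cancel hs0.ne', ENNReal.rpow_one,
      ENNReal.ofReal_rpow_of_nonneg (Real.rpow_nonneg hr0.le β) hs0.le,
      ← Real.rpow_mul hr0.le,
      show -(1/s)*s = -1 by field_simp, ENNReal.rpow_neg_one]
    ring
  rw [hL, hR] at h3
  calc ENNReal.ofReal (lam ^ s) * μB
      < ENNReal.ofReal (r ^ (β * s)) * G * μB⁻¹ * μB := by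
        exact (ENNReal.mul_lt_mul_iff_left hμB0 hμBT).mpr h3
    _ = ENNReal.ofReal (r ^ (β * s)) * G := by
        rw [mul_assoc, ENNReal.inv_mul_cancel hμB0 hμBT, mul_one]

/-- Weak-type boundedness of the fractional maximal operator. -/
theorem fracMax_weak_type
    (n : ℕ) (s β : ℝ) (hs : 1 ≤ s) (hβ0 : 0 ≤ β) (hβ : β < n / s)
    (f : (Fin n → ℝ) → ℝ) (hmeas : Measurable f)
    (hf : Integrable (fun x => |f x| ^ s)) :
    ∃ C : ℝ, 0 < C ∧ ∀ lam : ℝ, 0 < lam →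
      volume {x : Fin n → ℝ | ENNReal.ofReal lam < fracMax n β f x} ≤
        ENNReal.ofReal
          (C * (lam ^ (-s) * ∫ x, |f x| ^ s) ^ ((n : ℝ) / (n - β * s))) := by
  have hs0 : (0:ℝ) < s := lt_of_lt_of_le one_pos hs
  have hβs : β * s < n := (lt_div_iff₀ hs0).mp hβ
  have hp : (0:ℝ) < (n:ℝ) - β * s := by linarith
  set p : ℝ := (n:ℝ) - β * s with hpdef
  have hn : (0:ℝ) < n := lt_of_le_of_lt (mul_nonneg hβ0 hs0.le) hβs
  have hn' : 0 < n := by exact_mod_cast hn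
  haveI : Nonempty (Fin n) := Fin.pos_iff_nonempty.mp hn'
  haveI : Nontrivial (Fin n → ℝ) := inferInstance
  set c : ℝ≥0∞ := volume (Metric.ball (0 : Fin n → ℝ) 1) with hcdef
  have hc0 : c ≠ 0 := (measure_ball_pos volume _ one_pos).ne'
  have hcT : c ≠ ∞ := measure_ball_lt_top.ne
  set c' : ℝ := c.toReal with hc'def
  have hc'0 : 0 < c' := ENNReal.toReal_pos hc0 hcT
  have hcc : c = ENNReal.ofReal c' := (ENNReal.ofReal_toReal hcT).symm
  have hvol : ∀ (x : Fin n → ℝ) {r : ℝ}, 0 ≤ r →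
      volume (Metric.ball x r) = ENNReal.ofReal (r ^ ((n:ℝ))) * c := by
    intro x r hr
    rw [Measure.addHaar_ball volume x hr, Module.finrank_fin_fun, Real.rpow_natCast]
  set I : ℝ := ∫ x, |f x| ^ s with hIdef
  have hInn : 0 ≤ I := integral_nonneg fun x => Real.rpow_nonneg (abs_nonneg _) s
  have hg : Measurable fun y => ENNReal.ofReal (|f y| ^ s) :=
    ((Real.continuous_rpow_const hs0.le).measurable.comp hmeas.abs).ennreal_ofReal
  have hIlint : (∫⁻ x, ENNReal.ofReal (|f x| ^ s)) = ENNReal.ofReal I :=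
    (ofReal_integral_eq_lintegral_ofReal hf
      (Filter.Eventually.of_forall fun x => Real.rpow_nonneg (abs_nonneg _) s)).symm
  refine ⟨8 ^ n * c' ^ (-(β * s) / p), by positivity, ?_⟩
  intro lam hlam
  by_cases hI : I = 0
  · -- f vanishes a.e.: the superlevel set is empty
    have h0 : (fun x => |f x| ^ s) =ᵐ[volume] 0 :=
      (integral_eq_zero_iff_of_nonneg (fun x => Real.rpow_nonneg (abs_nonneg _) s) hf).mp hI
    have hfz' : (fun x => ENNReal.ofReal |f x|) =ᵐ[volume] (fun _ => (0:ℝ≥0∞)) := by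
      refine h0.mono fun x hx => ?_
      have hx0 : |f x| = 0 := by
        have := (Real.rpow_eq_zero (abs_nonneg (f x)) hs0.ne').mp hx
        exact this
      simp [hx0]
    have hzero : (∫⁻ x, ENNReal.ofReal |f x|) = 0 := by
      rw [lintegral_congr_ae hfz', lintegral_zero]
    have hM : ∀ x, fracMax n β f x = 0 := by
      intro x
      refine le_antisymm (iSup_le fun r => iSup_le fun hr => ?_) zero_le
      have hb0 : (∫⁻ y in Metric.ball x r, ENNReal.ofReal |f y|) = 0 :=
        le_antisymm ((setLIntegral_le_lintegral _ _).trans hzero.le) zero_le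
      rw [hb0, mul_zero, mul_zero]
    have hempty : {x : Fin n → ℝ | ENNReal.ofReal lam < fracMax n β f x} = ∅ := by
      ext x
      simp [hM x]
    rw [hempty, measure_empty]
    exact zero_le
  have hIpos : 0 < I := lt_of_le_of_ne hInn (Ne.symm hI)
  set L : ℝ := lam ^ (-s) * I with hLdef
  have hL0 : 0 < L := mul_pos (Real.rpow_pos_of_pos hlam (-s)) hIpos
  set R : ℝ := (L / c') ^ p⁻¹ with hRdef
  have hR0 : 0 < R := Real.rpow_pos_of_pos (div_pos hL0 hc'0) _
  set K : ℝ≥0∞ := ENNReal.ofReal (lam ^ s * R ^ (-(β * s))) with hKdef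
  have hKpos : 0 < lam ^ s * R ^ (-(β * s)) :=
    mul_pos (Real.rpow_pos_of_pos hlam s) (Real.rpow_pos_of_pos hR0 _)
  have hK0 : K ≠ 0 := by simpa [hKdef] using hKpos
  have hKT : K ≠ ∞ := ENNReal.ofReal_ne_top
  set E := {x : Fin n → ℝ | ENNReal.ofReal lam < fracMax n β f x} with hEdef
  have key : ∀ x ∈ E, ∃ r : ℝ, 0 < r ∧ r < R ∧
      K * volume (Metric.ball x r) ≤ ∫⁻ y in Metric.ball x r, ENNReal.ofReal (|f y| ^ s) := by
    intro x hx
    have hx' : ENNReal.ofReal lam < fracMax n β f x := hx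
    rw [fracMax, lt_iSup_iff] at hx'
    obtain ⟨r, hr⟩ := hx'
    rw [lt_iSup_iff] at hr
    obtain ⟨hr0, hlt⟩ := hr
    have hstar := star_ineq hs hlam hmeas hr0 hlt
    have hG_le : (∫⁻ y in Metric.ball x r, ENNReal.ofReal (|f y| ^ s)) ≤ ENNReal.ofReal I :=
      (setLIntegral_le_lintegral _ _).trans hIlint.le
    have h1 : ENNReal.ofReal (lam ^ s) * (ENNReal.ofReal (r ^ ((n:ℝ))) * c) <
        ENNReal.ofReal (r ^ (β * s)) * ENNReal.ofReal I := by
      rw [← hvol x hr0.le]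
      exact lt_of_lt_of_le hstar (mul_le_mul_right hG_le _)
    rw [hcc, ← ENNReal.ofReal_mul (by positivity : (0:ℝ) ≤ r ^ ((n:ℝ))),
      ← ENNReal.ofReal_mul (by positivity : (0:ℝ) ≤ lam ^ s),
      ← ENNReal.ofReal_mul (by positivity : (0:ℝ) ≤ r ^ (β * s))] at h1
    have hreal : lam ^ s * (r ^ ((n:ℝ)) * c') < r ^ (β * s) * I :=
      (ENNReal.ofReal_lt_ofReal_iff_of_nonneg (by positivity)).mp h1
    have hlamsne : (0:ℝ) < lam ^ s := Real.rpow_pos_of_pos hlam s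
    have hrp : r ^ p < L / c' := by
      rw [hpdef, Real.rpow_sub hr0, div_lt_div_iff₀ (Real.rpow_pos_of_pos hr0 _) hc'0]
      rw [hLdef, Real.rpow_neg hlam.le]
      have h := (mul_lt_mul_iff_right₀ (show (0:ℝ) < (lam ^ s)⁻¹ by positivity)).mpr hreal
      rw [← mul_assoc, inv_mul_cancel₀ hlamsne.ne', one_mul] at h
      calc r ^ ((n:ℝ)) * c' < (lam ^ s)⁻¹ * (r ^ (β * s) * I) := h
        _ = (lam ^ s)⁻¹ * I * r ^ (β * s) := by ring
    have hrlt : r < R := by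
      have h2 : (r ^ p) ^ p⁻¹ < R := by
        rw [hRdef]
        exact Real.rpow_lt_rpow (by positivity) hrp (by positivity)
      rwa [Real.rpow_rpow_inv hr0.le hp.ne'] at h2
    refine ⟨r, hr0, hrlt, ?_⟩
    have hz : -(β * s) ≤ 0 := neg_nonpos.mpr (mul_nonneg hβ0 hs0.le)
    have hrR : R ^ (-(β * s)) ≤ r ^ (-(β * s)) :=
      Real.rpow_le_rpow_of_nonpos hr0 hrlt.le hz
    have hrβ0 : (0:ℝ) < r ^ (β * s) := Real.rpow_pos_of_pos hr0 _
    have hinvβ : ENNReal.ofReal (r ^ (-(β * s))) = (ENNReal.ofReal (r ^ (β * s)))⁻¹ := by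
      rw [Real.rpow_neg hr0.le, ENNReal.ofReal_inv_of_pos hrβ0]
    calc K * volume (Metric.ball x r)
        ≤ ENNReal.ofReal (lam ^ s * r ^ (-(β * s))) * volume (Metric.ball x r) := by
          refine mul_le_mul_left (ENNReal.ofReal_le_ofReal ?_) _
          exact mul_le_mul_of_nonneg_left hrR hlamsne.le
      _ = (ENNReal.ofReal (r ^ (β * s)))⁻¹ *
            (ENNReal.ofReal (lam ^ s) * volume (Metric.ball x r)) := by
          rw [ENNReal.ofReal_mul hlamsne.le, hinvβ]
          ring
      _ ≤ (ENNReal.ofReal (r ^ (β * s)))⁻¹ *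
            (ENNReal.ofReal (r ^ (β * s)) * ∫⁻ y in Metric.ball x r, ENNReal.ofReal (|f y| ^ s)) :=
          mul_le_mul_right hstar.le _
      _ = ∫⁻ y in Metric.ball x r, ENNReal.ofReal (|f y| ^ s) := by
          rw [← mul_assoc, ENNReal.inv_mul_cancel (by simpa using hrβ0) ENNReal.ofReal_ne_top,
            one_mul]
  choose! rad hrad0 hradR hradK using key
  obtain ⟨u, huE, hdisj, hcov⟩ :=
    Vitali.exists_disjoint_subfamily_covering_enlargement_closedBall E id rad R
      (fun a ha => (hradR a ha).le) 4 (by norm_num)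
  simp only [id] at hdisj hcov
  have hdisjopen : u.PairwiseDisjoint fun b => Metric.ball b (rad b) :=
    hdisj.mono fun b => Metric.ball_subset_closedBall
  have hcount : u.Countable :=
    hdisjopen.countable_of_isOpen (fun b _ => Metric.isOpen_ball)
      (fun b hb => Metric.nonempty_ball.mpr (hrad0 b (huE hb)))
  have hEsub : E ⊆ ⋃ b ∈ u, Metric.ball b (8 * rad b) := by
    intro a ha
    obtain ⟨b, hb, hsub⟩ := hcov a ha
    have : a ∈ Metric.closedBall a (rad a) :=
      Metric.mem_closedBall_self (hrad0 a ha).le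
    have hab := hsub this
    refine Set.mem_biUnion hb ?_
    have h4 : Metric.closedBall b (4 * rad b) ⊆ Metric.ball b (8 * rad b) :=
      Metric.closedBall_subset_ball (by have := hrad0 b (huE hb); linarith)
    exact h4 hab
  haveI := hcount.to_subtype
  have hdisjsub : Pairwise (Function.onFun Disjoint fun b : u => Metric.ball (b : Fin n → ℝ) (rad b)) :=
    hdisjopen.subtype _ _
  have hsum : (∑' b : u, ∫⁻ y in Metric.ball (b : Fin n → ℝ) (rad b),
      ENNReal.ofReal (|f y| ^ s)) ≤ ENNReal.ofReal I := by
    rw [← lintegral_iUnion (fun b : u => measurableSet_ball) hdisjsub]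
    exact (setLIntegral_le_lintegral _ _).trans hIlint.le
  have hmain : volume E ≤ ENNReal.ofReal (8 ^ n : ℝ) * (K⁻¹ * ENNReal.ofReal I) := by
    calc volume E ≤ volume (⋃ b ∈ u, Metric.ball b (8 * rad b)) := measure_mono hEsub
      _ ≤ ∑' b : u, volume (Metric.ball (b : Fin n → ℝ) (8 * rad b)) :=
          measure_biUnion_le volume hcount _
      _ ≤ ∑' b : u, ENNReal.ofReal (8 ^ n : ℝ) *
            (K⁻¹ * ∫⁻ y in Metric.ball (b : Fin n → ℝ) (rad b), ENNReal.ofReal (|f y| ^ s)) := by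
          refine ENNReal.tsum_le_tsum fun b => ?_
          have hb := b.2
          have hr0 := hrad0 b (huE hb)
          have h8 : volume (Metric.ball (b : Fin n → ℝ) (8 * rad b)) =
              ENNReal.ofReal ((8:ℝ) ^ n) * volume (Metric.ball (b : Fin n → ℝ) (rad b)) := by
            rw [Measure.addHaar_ball_mul volume _ (by norm_num : (0:ℝ) ≤ 8),
              Module.finrank_fin_fun]
            congr 1
            exact (Measure.addHaar_ball_center volume _ _).symm
          rw [h8]
          refine mul_le_mul_right ?_ _
          have hKb := hradK b (huE hb)
          calc volume (Metric.ball (b : Fin n → ℝ) (rad b))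
              = K⁻¹ * (K * volume (Metric.ball (b : Fin n → ℝ) (rad b))) := by
                rw [← mul_assoc, ENNReal.inv_mul_cancel hK0 hKT, one_mul]
            _ ≤ K⁻¹ * _ := mul_le_mul_right hKb _
      _ = ENNReal.ofReal (8 ^ n : ℝ) * (K⁻¹ *
            ∑' b : u, ∫⁻ y in Metric.ball (b : Fin n → ℝ) (rad b), ENNReal.ofReal (|f y| ^ s)) := by
          rw [ENNReal.tsum_mul_left, ENNReal.tsum_mul_left]
      _ ≤ ENNReal.ofReal (8 ^ n : ℝ) * (K⁻¹ * ENNReal.ofReal I) := by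
          exact mul_le_mul_right (mul_le_mul_right hsum _) _
  refine hmain.trans ?_
  have hKinv : K⁻¹ = ENNReal.ofReal ((lam ^ s * R ^ (-(β * s)))⁻¹) := by
    rw [hKdef, ← ENNReal.ofReal_inv_of_pos hKpos]
  have harith : (8:ℝ) ^ n * ((lam ^ s * R ^ (-(β * s)))⁻¹ * I) =
      8 ^ n * c' ^ (-(β * s) / p) * (lam ^ (-s) * I) ^ ((n:ℝ) / p) := by
    have hbase : (0:ℝ) < L / c' := div_pos hL0 hc'0
    have hq : R ^ (β * s) = (L / c') ^ (β * s / p) := by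
      rw [hRdef, ← Real.rpow_mul hbase.le]
      ring_nf
    have h1 : (lam ^ s * R ^ (-(β * s)))⁻¹ = lam ^ (-s) * R ^ (β * s) := by
      rw [mul_inv, ← Real.rpow_neg hlam.le, ← Real.rpow_neg hR0.le, neg_neg]
    have h2 : (L / c') ^ (β * s / p) = L ^ (β * s / p) * c' ^ (-(β * s) / p) := by
      rw [Real.div_rpow hL0.le hc'0.le, neg_div, Real.rpow_neg hc'0.le, div_eq_mul_inv]
    have h3 : L * L ^ (β * s / p) = L ^ ((n:ℝ) / p) := by
      have hnp : (n:ℝ) / p = 1 + β * s / p := by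
        field_simp [hpdef]
        linarith
      rw [hnp, Real.rpow_add hL0, Real.rpow_one]
    rw [h1, hq, h2]
    have : lam ^ (-s) * I = L := hLdef.symm
    calc (8:ℝ) ^ n * (lam ^ (-s) * (L ^ (β * s / p) * c' ^ (-(β * s) / p)) * I)
        = 8 ^ n * c' ^ (-(β * s) / p) * ((lam ^ (-s) * I) * (lam ^ (-s) * I) ^ (β * s / p)) := by
          rw [this]
          ring
      _ = 8 ^ n * c' ^ (-(β * s) / p) * (lam ^ (-s) * I) ^ ((n:ℝ) / p) := by
          rw [this, h3]
  calc ENNReal.ofReal (8 ^ n : ℝ) * (K⁻¹ * ENNReal.ofReal I)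
      = ENNReal.ofReal ((8:ℝ) ^ n * ((lam ^ s * R ^ (-(β * s)))⁻¹ * I)) := by
        rw [hKinv, ← ENNReal.ofReal_mul (inv_nonneg.mpr hKpos.le),
          ← ENNReal.ofReal_mul (by positivity)]
    _ ≤ ENNReal.ofReal (8 ^ n * c' ^ (-(β * s) / p) * (lam ^ (-s) * I) ^ ((n:ℝ) / p)) := by
        rw [harith]
end
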